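/- For every graph H, if a finite simple graph G is H-pivot-unique, then every graph pivot-equivalent to G is H-pivot-unique. -/

import Mathlib

/-!  Basic notions: local complementation, edge pivot, pivot-equivalence, pivot-minors. -/

variable {V : Type*} {W : Type*}

/-- Local complementation at a vertex `u`: complement the adjacency inside the
neighbourhood of `u`. -/
def localComp (G : SimpleGraph V) (u : V) : SimpleGraph V where
  Adj x y := x ≠ y ∧
    ((G.Adj u x ∧ G.Adj u y ∧ ¬ G.Adj x y) ∨ (¬ (G.Adj u x ∧ G.Adj u y) ∧ G.Adj x y))
  symm := by
    constructor
    intro x y h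
    obtain ⟨hne, h⟩ := h
    refine ⟨hne.symm, ?_⟩
    rw [G.adj_comm y x]
    tauto
  loopless := by
    constructor
    intro x h
    exact h.1 rfl

/-- The edge pivot `G ∧ uv = ((G * u) * v) * u`. -/
def pivotEdge (G : SimpleGraph V) (u v : V) : SimpleGraph V :=
  localComp (localComp (localComp G u) v) u

/-- One pivot step: pivoting along an edge of the graph. -/
def PivotStep (G G' : SimpleGraph V) : Prop :=
  ∃ u v, G.Adj u v ∧ G' = pivotEdge G u v

/-- Two graphs on the same vertex set are pivot-equivalent if one can be obtained
from the other by a sequence of edge pivots. -/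
def PivotEquiv (G G' : SimpleGraph V) : Prop :=
  Relation.ReflTransGen PivotStep G G'

/-- `H` is a pivot-minor of `G` on the vertex subset `s`: `H` is obtained (up to
isomorphism) from `G` by a sequence of edge pivots and deletions of the vertices
outside `s`.  Since pivoting an edge commutes with deleting a vertex not on that
edge, this is equivalent to performing all the edge pivots first and then deleting
the vertices outside `s`, which is how we state it. -/
def HasPivotMinorOn (G : SimpleGraph V) (s : Set V) (H : SimpleGraph W) : Prop :=
  ∃ G' : SimpleGraph V, PivotEquiv G G' ∧ Nonempty ((G'.induce s) ≃g H)

/-- `G` contains a pivot-minor isomorphic to `H`. -/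
def HasPivotMinor (G : SimpleGraph V) (H : SimpleGraph W) : Prop :=
  ∃ s : Set V, HasPivotMinorOn G s H

/-- `G'` is a result of contracting the vertex `v` in `G` (denoted `G/v`):
if `v` is isolated this is `G - v`, and otherwise it is `(G ∧ zv) - v`
for some neighbour `z` of `v` (well defined up to pivot-equivalence). -/
def IsContraction (G : SimpleGraph V) (v : V) (G' : SimpleGraph ↥{u : V | u ≠ v}) : Prop :=
  ((∀ z, ¬ G.Adj v z) ∧ G' = G.induce {u : V | u ≠ v}) ∨
    (∃ z, G.Adj v z ∧ G' = (pivotEdge G z v).induce {u : V | u ≠ v})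

/-- `G` is `H`-pivot-unique: `G` contains a pivot-minor isomorphic to `H` and for
every vertex `v`, at most one of `G - v` and `G / v` contains a pivot-minor
isomorphic to `H`. -/
def PivotUnique (G : SimpleGraph V) (H : SimpleGraph W) : Prop :=
  HasPivotMinor G H ∧
    ∀ v : V, ¬ (HasPivotMinor (G.induce {u : V | u ≠ v}) H ∧
      ∃ G' : SimpleGraph ↥{u : V | u ≠ v}, IsContraction G v G' ∧ HasPivotMinor G' H)

/-- `G` contains an induced subgraph isomorphic to `H`. -/
def HasInducedSubgraphIso (G : SimpleGraph V) (H : SimpleGraph W) : Prop :=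
  ∃ s : Set V, Nonempty ((G.induce s) ≃g H)

lemma localComp_adj (G : SimpleGraph V) (u x y : V) :
    (localComp G u).Adj x y ↔ x ≠ y ∧
    ((G.Adj u x ∧ G.Adj u y ∧ ¬ G.Adj x y) ∨ (¬ (G.Adj u x ∧ G.Adj u y) ∧ G.Adj x y)) :=
  Iff.rfl

lemma localComp_involutive (G : SimpleGraph V) (u : V) :
    localComp (localComp G u) u = G := by
  ext x y
  simp only [localComp_adj, G.irrefl]
  have n1 : G.Adj u x → u ≠ x := fun h => G.ne_of_adj h
  have n2 : G.Adj u y → u ≠ y := fun h => G.ne_of_adj h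
  have n3 : G.Adj x y → x ≠ y := fun h => G.ne_of_adj h
  by_cases a1 : G.Adj u x <;> by_cases a2 : G.Adj u y <;> by_cases a3 : G.Adj x y <;>
    simp_all

lemma pivot_involutive (G : SimpleGraph V) (u v : V) :
    pivotEdge (pivotEdge G u v) u v = G := by
  show localComp (localComp (localComp (localComp (localComp (localComp G u) v) u) u) v) u = G
  rw [localComp_involutive, localComp_involutive, localComp_involutive]

section
variable {G : SimpleGraph V} {u v w x y z : V}

lemma pivot_adj_uv (huv : G.Adj u v) : (pivotEdge G u v).Adj u v := by
  have hne : u ≠ v := G.ne_of_adj huv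
  simp only [pivotEdge, localComp_adj, G.adj_comm v u, G.irrefl]
  simp [huv, hne, Ne.symm hne]

lemma pivot_adj_swap1 (huv : G.Adj u v) (hyu : y ≠ u) (hyv : y ≠ v) :
    (pivotEdge G u v).Adj u y ↔ G.Adj v y := by
  have hne : u ≠ v := G.ne_of_adj huv
  simp only [pivotEdge, localComp_adj, G.adj_comm v u, G.adj_comm y u, G.adj_comm y v,
    G.irrefl]
  by_cases a2 : G.Adj u y <;> by_cases a3 : G.Adj v y <;>
    simp_all [hne, Ne.symm hne, hyu, Ne.symm hyu, hyv, Ne.symm hyv]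

lemma pivot_adj_swap2 (huv : G.Adj u v) (hyu : y ≠ u) (hyv : y ≠ v) :
    (pivotEdge G u v).Adj v y ↔ G.Adj u y := by
  have hne : u ≠ v := G.ne_of_adj huv
  simp only [pivotEdge, localComp_adj, G.adj_comm v u, G.adj_comm y u, G.adj_comm y v,
    G.irrefl]
  by_cases a2 : G.Adj u y <;> by_cases a3 : G.Adj v y <;>
    simp_all [hne, Ne.symm hne, hyu, Ne.symm hyu, hyv, Ne.symm hyv]

/-- closed form for non-endpoints -/
lemma pivot_adj_other (huv : G.Adj u v) (hxu : x ≠ u) (hxv : x ≠ v) (hyu : y ≠ u)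
    (hyv : y ≠ v) :
    (pivotEdge G u v).Adj x y ↔ x ≠ y ∧
      ¬ (G.Adj x y ↔ ((G.Adj u x ∨ G.Adj v x) ∧ (G.Adj u y ∨ G.Adj v y) ∧
        ¬ ((G.Adj u x ↔ G.Adj u y) ∧ (G.Adj v x ↔ G.Adj v y)))) := by
  have hne : u ≠ v := G.ne_of_adj huv
  simp only [pivotEdge, localComp_adj, G.adj_comm v u, G.adj_comm x u, G.adj_comm x v,
    G.adj_comm y u, G.adj_comm y v, G.adj_comm y x, G.irrefl]
  by_cases a1 : G.Adj u x <;> by_cases a2 : G.Adj u y <;> by_cases a3 : G.Adj v x <;>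
    by_cases a4 : G.Adj v y <;> by_cases a5 : G.Adj x y <;>
    simp_all [hne, Ne.symm hne, hxu, Ne.symm hxu, hxv, Ne.symm hxv, hyu, Ne.symm hyu,
      hyv, Ne.symm hyv]
end

section
variable {G : SimpleGraph V} {u v w x y z : V}

lemma pivot_adj_notnbr (huv : G.Adj u v) (hwu : w ≠ u) (hwv : w ≠ v)
    (hu : ¬ G.Adj u w) (hv : ¬ G.Adj v w) :
    (pivotEdge G u v).Adj w x ↔ G.Adj w x := by
  rcases eq_or_ne u x with rfl | hux
  · rw [(pivotEdge G u v).adj_comm, pivot_adj_swap1 huv hwu hwv]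
    exact iff_of_false hv (fun h => hu h.symm)
  rcases eq_or_ne v x with rfl | hvx
  · rw [(pivotEdge G u v).adj_comm, pivot_adj_swap2 huv hwu hwv]
    exact iff_of_false hu (fun h => hv h.symm)
  rcases eq_or_ne w x with rfl | hwx
  · simp only [SimpleGraph.irrefl]
  rw [pivot_adj_other huv hwu hwv (Ne.symm hux) (Ne.symm hvx)]
  have hforward : G.Adj w x → w ≠ x := G.ne_of_adj
  by_cases a1 : G.Adj u x <;> by_cases a2 : G.Adj v x <;> by_cases a5 : G.Adj w x <;>
    simp_all [hwx]

lemma pivot_comm (huv : G.Adj u v) : pivotEdge G u v = pivotEdge G v u := by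
  have hvu := huv.symm
  ext x y
  rcases eq_or_ne u x with rfl | hux
  · rcases eq_or_ne u y with rfl | huy
    · simp only [SimpleGraph.irrefl]
    rcases eq_or_ne v y with rfl | hvy
    · exact iff_of_true (pivot_adj_uv huv) ((pivot_adj_uv hvu).symm)
    · rw [pivot_adj_swap1 huv (Ne.symm huy) (Ne.symm hvy),
        pivot_adj_swap2 hvu (Ne.symm hvy) (Ne.symm huy)]
  rcases eq_or_ne v x with rfl | hvx
  · rcases eq_or_ne u y with rfl | huy
    · exact iff_of_true ((pivot_adj_uv huv).symm) (pivot_adj_uv hvu)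
    rcases eq_or_ne v y with rfl | hvy
    · simp only [SimpleGraph.irrefl]
    · rw [pivot_adj_swap2 huv (Ne.symm huy) (Ne.symm hvy),
        pivot_adj_swap1 hvu (Ne.symm hvy) (Ne.symm huy)]
  rcases eq_or_ne u y with rfl | huy
  · rw [(pivotEdge G u v).adj_comm, (pivotEdge G v u).adj_comm,
      pivot_adj_swap1 huv (Ne.symm hux) (Ne.symm hvx),
      pivot_adj_swap2 hvu (Ne.symm hvx) (Ne.symm hux)]
  rcases eq_or_ne v y with rfl | hvy
  · rw [(pivotEdge G u v).adj_comm, (pivotEdge G v u).adj_comm,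
      pivot_adj_swap2 huv (Ne.symm hux) (Ne.symm hvx),
      pivot_adj_swap1 hvu (Ne.symm hvx) (Ne.symm hux)]
  rw [pivot_adj_other huv (Ne.symm hux) (Ne.symm hvx) (Ne.symm huy) (Ne.symm hvy),
    pivot_adj_other hvu (Ne.symm hvx) (Ne.symm hux) (Ne.symm hvy) (Ne.symm huy)]
  by_cases a1 : G.Adj u x <;> by_cases a2 : G.Adj v x <;> by_cases a3 : G.Adj u y <;>
    by_cases a4 : G.Adj v y <;> by_cases a5 : G.Adj x y <;> simp_all
end

section
variable {G : SimpleGraph V} {w x y z z' : V}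

lemma wstar_pointwise (hwz : G.Adj w z) (hwz' : G.Adj w z') (hzz' : z ≠ z')
    (hx : x ≠ w) (hy : y ≠ w) :
    (pivotEdge (pivotEdge G z w) z z').Adj x y ↔ (pivotEdge G z' w).Adj x y := by
  have hzw : G.Adj z w := hwz.symm
  have hz'w : G.Adj z' w := hwz'.symm
  have hznw : z ≠ w := G.ne_of_adj hzw
  have hz'nw : z' ≠ w := G.ne_of_adj hz'w
  have hAzz' : (pivotEdge G z w).Adj z z' :=
    (pivot_adj_swap1 hzw (Ne.symm hzz') hz'nw).mpr hwz'
  rcases eq_or_ne x y with rfl | hxy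
  · simp only [SimpleGraph.irrefl]
  rcases eq_or_ne z x with rfl | hzx
  · -- x = z
    rcases eq_or_ne z' y with rfl | hz'y
    · refine iff_of_true (pivot_adj_uv hAzz') ?_
      exact ((pivot_adj_swap1 hz'w hzz' hznw).mpr hwz).symm
    · rw [pivot_adj_swap1 hAzz' (Ne.symm hxy) (Ne.symm hz'y),
        pivot_adj_other hzw (Ne.symm hzz') hz'nw (Ne.symm hxy) hy,
        pivot_adj_other hz'w hzz' hznw (Ne.symm hz'y) hy,
        G.adj_comm z' z]
      by_cases a1 : G.Adj z z' <;> by_cases a2 : G.Adj z y <;> by_cases a3 : G.Adj z' y <;>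
        by_cases a4 : G.Adj w y <;>
        simp_all [hwz, hwz', hxy, Ne.symm hxy, hz'y, Ne.symm hz'y]
  rcases eq_or_ne z' x with rfl | hz'x
  · -- x = z'
    rcases eq_or_ne z y with rfl | hzy
    · refine iff_of_true (pivot_adj_uv hAzz').symm ?_
      exact (pivot_adj_swap1 hz'w hzz' hznw).mpr hwz
    · rw [pivot_adj_swap2 hAzz' (Ne.symm hzy) (Ne.symm hxy),
        pivot_adj_swap1 hzw (Ne.symm hzy) hy,
        pivot_adj_swap1 hz'w (Ne.symm hxy) hy]
  rcases eq_or_ne z y with rfl | hzy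
  · -- y = z, x ∉ {z, z', w}
    rw [(pivotEdge (pivotEdge G z w) z z').adj_comm, (pivotEdge G z' w).adj_comm,
      pivot_adj_swap1 hAzz' (Ne.symm hzx) (Ne.symm hz'x),
      pivot_adj_other hzw (Ne.symm hzz') hz'nw (Ne.symm hzx) hx,
      pivot_adj_other hz'w hzz' hznw (Ne.symm hz'x) hx,
      G.adj_comm z' z]
    by_cases a1 : G.Adj z z' <;> by_cases a2 : G.Adj z x <;> by_cases a3 : G.Adj z' x <;>
      by_cases a4 : G.Adj w x <;>
      simp_all [hwz, hwz', hzx, Ne.symm hzx, hz'x, Ne.symm hz'x]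
  rcases eq_or_ne z' y with rfl | hz'y
  · -- y = z', x ∉ {z, z', w}
    rw [(pivotEdge (pivotEdge G z w) z z').adj_comm, (pivotEdge G z' w).adj_comm,
      pivot_adj_swap2 hAzz' (Ne.symm hzx) (Ne.symm hz'x),
      pivot_adj_swap1 hzw (Ne.symm hzx) hx,
      pivot_adj_swap1 hz'w (Ne.symm hz'x) hx]
  -- x, y ∉ {z, z', w}
  rw [pivot_adj_other hAzz' (Ne.symm hzx) (Ne.symm hz'x) (Ne.symm hzy) (Ne.symm hz'y),
    pivot_adj_swap1 hzw (Ne.symm hzx) hx,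
    pivot_adj_swap1 hzw (Ne.symm hzy) hy,
    pivot_adj_other hzw (Ne.symm hzz') hz'nw (Ne.symm hzx) hx,
    pivot_adj_other hzw (Ne.symm hzz') hz'nw (Ne.symm hzy) hy,
    pivot_adj_other hzw (Ne.symm hzx) hx (Ne.symm hzy) hy,
    pivot_adj_other hz'w (Ne.symm hz'x) hx (Ne.symm hz'y) hy]
  by_cases a1 : G.Adj z z' <;> by_cases a2 : G.Adj z x <;> by_cases a3 : G.Adj z y <;>
    by_cases a4 : G.Adj z' x <;> by_cases a5 : G.Adj z' y <;> by_cases a6 : G.Adj w x <;>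
    by_cases a7 : G.Adj w y <;> by_cases a8 : G.Adj x y <;>
    simp_all [hwz, hwz', hxy, hzx, Ne.symm hzx, hzy, Ne.symm hzy, hz'x, Ne.symm hz'x,
      hz'y, Ne.symm hz'y]
end

section
variable {G : SimpleGraph V} {u v w x y : V}

set_option maxHeartbeats 1600000 in
lemma caseB_pointwise (huv : G.Adj u v) (huw : G.Adj u w) (hwv : w ≠ v)
    (hx : x ≠ w) (hy : y ≠ w) :
    (pivotEdge (pivotEdge G u v) v w).Adj x y ↔ (pivotEdge G u w).Adj x y := by
  have hnuv : u ≠ v := G.ne_of_adj huv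
  have hnuw : u ≠ w := G.ne_of_adj huw
  have hwu : w ≠ u := Ne.symm hnuw
  have hvw : v ≠ w := Ne.symm hwv
  have hBvw : (pivotEdge G u v).Adj v w := (pivot_adj_swap2 huv hwu hwv).mpr huw
  have hBuv : (pivotEdge G u v).Adj u v := pivot_adj_uv huv
  rcases eq_or_ne x y with rfl | hxy
  · simp only [SimpleGraph.irrefl]
  rcases eq_or_ne u x with rfl | hux
  · rcases eq_or_ne v y with rfl | hvy
    · -- x = u, y = v
      rw [(pivotEdge (pivotEdge G u v) v w).adj_comm,
        pivot_adj_swap1 hBvw hnuv hnuw,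
        (pivotEdge G u v).adj_comm w u, pivot_adj_swap1 huv hwu hwv,
        pivot_adj_swap1 huw (Ne.symm hnuv) hvw, G.adj_comm w v]
    · -- x = u, y ∉ {u,v,w}
      rw [pivot_adj_other hBvw hnuv hnuw (Ne.symm hvy) hy,
        (pivotEdge G u v).adj_comm v u, (pivotEdge G u v).adj_comm w u,
        pivot_adj_swap1 huv hwu hwv,
        pivot_adj_swap1 huv (Ne.symm hxy) (Ne.symm hvy),
        pivot_adj_swap2 huv (Ne.symm hxy) (Ne.symm hvy),
        pivot_adj_other huv hwu hwv (Ne.symm hxy) (Ne.symm hvy),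
        pivot_adj_swap1 huw (Ne.symm hxy) hy]
      by_cases a1 : G.Adj v w <;> by_cases a2 : G.Adj u y <;> by_cases a3 : G.Adj v y <;>
        by_cases a4 : G.Adj w y <;>
        simp_all [huv, huw, hxy, hvy, Ne.symm hvy, hy, Ne.symm hy, hwv, hwu, hvw, hnuv, hnuw]
  rcases eq_or_ne v x with rfl | hvx
  · rcases eq_or_ne u y with rfl | huy
    · -- x = v, y = u
      rw [pivot_adj_swap1 hBvw (Ne.symm hxy) hnuw,
        (pivotEdge G u v).adj_comm w u, pivot_adj_swap1 huv hwu hwv,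
        (pivotEdge G u w).adj_comm, pivot_adj_swap1 huw hxy hvw,
        G.adj_comm w v]
    · -- x = v, y ∉ {u,v,w}
      rw [pivot_adj_swap1 hBvw (Ne.symm hxy) hy,
        pivot_adj_other huv hwu hwv (Ne.symm huy) (Ne.symm hxy),
        pivot_adj_other huw (Ne.symm hnuv) hvw (Ne.symm huy) hy,
        G.adj_comm w v]
      by_cases a1 : G.Adj v w <;> by_cases a2 : G.Adj u y <;> by_cases a3 : G.Adj v y <;>
        by_cases a4 : G.Adj w y <;>
        simp_all [huv, huw, hxy, huy, Ne.symm huy, hy, Ne.symm hy, hwv, hwu, hvw, hnuv, hnuw]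
  rcases eq_or_ne u y with rfl | huy
  · -- y = u, x ∉ {u,v,w}
    rw [(pivotEdge (pivotEdge G u v) v w).adj_comm, (pivotEdge G u w).adj_comm,
      pivot_adj_other hBvw hnuv hnuw (Ne.symm hvx) hx,
      (pivotEdge G u v).adj_comm v u, (pivotEdge G u v).adj_comm w u,
      pivot_adj_swap1 huv hwu hwv,
      pivot_adj_swap1 huv (Ne.symm hux) (Ne.symm hvx),
      pivot_adj_swap2 huv (Ne.symm hux) (Ne.symm hvx),
      pivot_adj_other huv hwu hwv (Ne.symm hux) (Ne.symm hvx),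
      pivot_adj_swap1 huw (Ne.symm hux) hx]
    by_cases a1 : G.Adj v w <;> by_cases a2 : G.Adj u x <;> by_cases a3 : G.Adj v x <;>
      by_cases a4 : G.Adj w x <;>
      simp_all [huv, huw, hux, Ne.symm hux, hvx, Ne.symm hvx, hx, Ne.symm hx, hwv, hwu, hvw, hnuv, hnuw]
  rcases eq_or_ne v y with rfl | hvy
  · -- y = v, x ∉ {u,v,w}
    rw [(pivotEdge (pivotEdge G u v) v w).adj_comm, (pivotEdge G u w).adj_comm,
      pivot_adj_swap1 hBvw (Ne.symm hvx) hx,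
      pivot_adj_other huv hwu hwv (Ne.symm hux) (Ne.symm hvx),
      pivot_adj_other huw (Ne.symm hnuv) hvw (Ne.symm hux) hx,
      G.adj_comm w v]
    by_cases a1 : G.Adj v w <;> by_cases a2 : G.Adj u x <;> by_cases a3 : G.Adj v x <;>
      by_cases a4 : G.Adj w x <;>
      simp_all [huv, huw, hux, Ne.symm hux, hvx, Ne.symm hvx, hx, Ne.symm hx, hwv, hwu, hvw, hnuv, hnuw]
  -- x, y ∉ {u,v,w}
  rw [pivot_adj_other hBvw (Ne.symm hvx) hx (Ne.symm hvy) hy,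
    pivot_adj_swap2 huv (Ne.symm hux) (Ne.symm hvx),
    pivot_adj_swap2 huv (Ne.symm huy) (Ne.symm hvy),
    pivot_adj_other huv hwu hwv (Ne.symm hux) (Ne.symm hvx),
    pivot_adj_other huv hwu hwv (Ne.symm huy) (Ne.symm hvy),
    pivot_adj_other huv (Ne.symm hux) (Ne.symm hvx) (Ne.symm huy) (Ne.symm hvy),
    pivot_adj_other huw (Ne.symm hux) hx (Ne.symm huy) hy]
  by_cases a1 : G.Adj v w <;> by_cases a2 : G.Adj u x <;> by_cases a3 : G.Adj v x <;>
    by_cases a4 : G.Adj w x <;> by_cases a5 : G.Adj u y <;> by_cases a6 : G.Adj v y <;>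
    by_cases a7 : G.Adj w y <;> by_cases a8 : G.Adj x y <;>
    simp_all [huv, huw, hxy, hux, Ne.symm hux, hvx, Ne.symm hvx, huy, Ne.symm huy,
      hvy, Ne.symm hvy, hx, Ne.symm hx, hy, Ne.symm hy, hwv, hwu, hvw, hnuv, hnuw]
end

section
variable {G : SimpleGraph V} {u v w x y z : V}

set_option maxHeartbeats 4000000 in
lemma caseA_pointwise (huv : G.Adj u v) (hwu : w ≠ u) (hwv : w ≠ v)
    (hu : ¬ G.Adj u w) (hv : ¬ G.Adj v w) (hwz : G.Adj w z) (hx : x ≠ w) (hy : y ≠ w) :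
    (pivotEdge (pivotEdge G u v) z w).Adj x y ↔ (pivotEdge (pivotEdge G z w) u v).Adj x y := by
  have hzw : G.Adj z w := hwz.symm
  have hnuv : u ≠ v := G.ne_of_adj huv
  have hznw : z ≠ w := G.ne_of_adj hzw
  have hu' : ¬ G.Adj w u := fun h => hu h.symm
  have hv' : ¬ G.Adj w v := fun h => hv h.symm
  have hzu : z ≠ u := fun h => hu (h ▸ hzw)
  have hzv : z ≠ v := fun h => hv (h ▸ hzw)
  have hBzw : (pivotEdge G u v).Adj z w :=
    ((pivot_adj_notnbr huv hwu hwv hu hv).mpr hwz).symm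
  have hBuv : (pivotEdge G u v).Adj u v := pivot_adj_uv huv
  have hAuv : (pivotEdge G z w).Adj u v := by
    rw [pivot_adj_other hzw (Ne.symm hzu) (Ne.symm hwu) (Ne.symm hzv) (Ne.symm hwv)]
    refine ⟨hnuv, ?_⟩
    by_cases b1 : G.Adj z u <;> by_cases b2 : G.Adj z v <;> simp_all [huv, hu', hv']
  rcases eq_or_ne x y with rfl | hxy
  · simp only [SimpleGraph.irrefl]
  rcases eq_or_ne u x with rfl | hux
  · rcases eq_or_ne v y with rfl | hvy
    · -- (u,v)
      simp only [pivot_adj_other hBzw (Ne.symm hzu) (Ne.symm hwu) (Ne.symm hzv) (Ne.symm hwv),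
        (pivotEdge G u v).adj_comm z u, (pivotEdge G u v).adj_comm z v,
        pivot_adj_swap1 huv hzu hzv, pivot_adj_swap2 huv hzu hzv,
        pivot_adj_notnbr huv hwu hwv hu hv]
      by_cases b1 : G.Adj v z <;> by_cases b2 : G.Adj u z <;>
        simp_all [huv, hnuv, hu', hv', hBuv, pivot_adj_uv hAuv]
    rcases eq_or_ne z y with rfl | hzy
    · -- (u,z)
      simp only [(pivotEdge (pivotEdge G u v) z w).adj_comm u z,
        pivot_adj_swap1 hBzw (Ne.symm hzu) (Ne.symm hwu),
        pivot_adj_notnbr huv hwu hwv hu hv,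
        pivot_adj_swap1 hAuv hzu hzv,
        (pivotEdge G z w).adj_comm v z,
        pivot_adj_swap1 hzw (Ne.symm hzv) (Ne.symm hwv)]
      simp [hu', hv']
    · -- (u,y) generic y
      simp only [pivot_adj_other hBzw (Ne.symm hzu) (Ne.symm hwu) (Ne.symm hzy) hy,
        pivot_adj_swap1 huv (Ne.symm hxy) (Ne.symm hvy),
        (pivotEdge G u v).adj_comm z u,
        pivot_adj_swap1 huv hzu hzv,
        pivot_adj_other huv hzu hzv (Ne.symm hxy) (Ne.symm hvy),
        pivot_adj_notnbr huv hwu hwv hu hv,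
        pivot_adj_swap1 hAuv (Ne.symm hxy) (Ne.symm hvy),
        pivot_adj_other hzw (Ne.symm hzv) (Ne.symm hwv) (Ne.symm hzy) hy,
        G.adj_comm z v, G.adj_comm z u]
      by_cases b1 : G.Adj u y <;> by_cases b2 : G.Adj v y <;> by_cases b3 : G.Adj u z <;>
        by_cases b4 : G.Adj v z <;> by_cases b5 : G.Adj z y <;> by_cases b6 : G.Adj w y <;>
        simp_all [huv, hnuv, hu', hv', hxy, Ne.symm hxy, hvy, Ne.symm hvy, hzy, Ne.symm hzy,
          hy, Ne.symm hy, hzu, hzv, hznw]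
  rcases eq_or_ne v x with rfl | hvx
  · rcases eq_or_ne u y with rfl | huy
    · -- (v,u)
      simp only [(pivotEdge (pivotEdge G u v) z w).adj_comm v u,
        (pivotEdge (pivotEdge G z w) u v).adj_comm v u,
        pivot_adj_other hBzw (Ne.symm hzu) (Ne.symm hwu) (Ne.symm hzv) (Ne.symm hwv),
        (pivotEdge G u v).adj_comm z u, (pivotEdge G u v).adj_comm z v,
        pivot_adj_swap1 huv hzu hzv, pivot_adj_swap2 huv hzu hzv,
        pivot_adj_notnbr huv hwu hwv hu hv]
      by_cases b1 : G.Adj v z <;> by_cases b2 : G.Adj u z <;>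
        simp_all [huv, hnuv, hu', hv', hBuv, pivot_adj_uv hAuv]
    rcases eq_or_ne z y with rfl | hzy
    · -- (v,z)
      simp only [(pivotEdge (pivotEdge G u v) z w).adj_comm v z,
        pivot_adj_swap1 hBzw (Ne.symm hzv) (Ne.symm hwv),
        pivot_adj_notnbr huv hwu hwv hu hv,
        pivot_adj_swap2 hAuv hzu hzv,
        (pivotEdge G z w).adj_comm u z,
        pivot_adj_swap1 hzw (Ne.symm hzu) (Ne.symm hwu)]
      simp [hu', hv']
    · -- (v,y) generic y
      simp only [pivot_adj_other hBzw (Ne.symm hzv) (Ne.symm hwv) (Ne.symm hzy) hy,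
        pivot_adj_swap2 huv (Ne.symm huy) (Ne.symm hxy),
        (pivotEdge G u v).adj_comm z v,
        pivot_adj_swap2 huv hzu hzv,
        pivot_adj_other huv hzu hzv (Ne.symm huy) (Ne.symm hxy),
        pivot_adj_notnbr huv hwu hwv hu hv,
        pivot_adj_swap2 hAuv (Ne.symm huy) (Ne.symm hxy),
        pivot_adj_other hzw (Ne.symm hzu) (Ne.symm hwu) (Ne.symm hzy) hy,
        G.adj_comm z v, G.adj_comm z u]
      by_cases b1 : G.Adj u y <;> by_cases b2 : G.Adj v y <;> by_cases b3 : G.Adj u z <;>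
        by_cases b4 : G.Adj v z <;> by_cases b5 : G.Adj z y <;> by_cases b6 : G.Adj w y <;>
        simp_all [huv, hnuv, hu', hv', hxy, Ne.symm hxy, huy, Ne.symm huy, hzy, Ne.symm hzy,
          hy, Ne.symm hy, hzu, hzv, hznw]
  rcases eq_or_ne z x with rfl | hzx
  · rcases eq_or_ne u y with rfl | huy
    · -- (z,u)
      simp only [pivot_adj_swap1 hBzw (Ne.symm hzu) (Ne.symm hwu),
        pivot_adj_notnbr huv hwu hwv hu hv,
        (pivotEdge (pivotEdge G z w) u v).adj_comm z u,
        pivot_adj_swap1 hAuv hzu hzv,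
        (pivotEdge G z w).adj_comm v z,
        pivot_adj_swap1 hzw (Ne.symm hzv) (Ne.symm hwv)]
      simp [hu', hv']
    rcases eq_or_ne v y with rfl | hvy
    · -- (z,v)
      simp only [pivot_adj_swap1 hBzw (Ne.symm hzv) (Ne.symm hwv),
        pivot_adj_notnbr huv hwu hwv hu hv,
        (pivotEdge (pivotEdge G z w) u v).adj_comm z v,
        pivot_adj_swap2 hAuv hzu hzv,
        (pivotEdge G z w).adj_comm u z,
        pivot_adj_swap1 hzw (Ne.symm hzu) (Ne.symm hwu)]
      simp [hu', hv']
    · -- (z,y) generic y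
      simp only [pivot_adj_swap1 hBzw (Ne.symm hxy) hy,
        pivot_adj_notnbr huv hwu hwv hu hv,
        pivot_adj_other hAuv hzu hzv (Ne.symm huy) (Ne.symm hvy),
        (pivotEdge G z w).adj_comm u z, (pivotEdge G z w).adj_comm v z,
        pivot_adj_swap1 hzw (Ne.symm hzu) (Ne.symm hwu),
        pivot_adj_swap1 hzw (Ne.symm hzv) (Ne.symm hwv),
        pivot_adj_swap1 hzw (Ne.symm hxy) hy,
        pivot_adj_other hzw (Ne.symm hzu) (Ne.symm hwu) (Ne.symm hxy) hy,
        pivot_adj_other hzw (Ne.symm hzv) (Ne.symm hwv) (Ne.symm hxy) hy,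
        G.adj_comm z u, G.adj_comm z v]
      by_cases b1 : G.Adj u y <;> by_cases b2 : G.Adj v y <;> by_cases b3 : G.Adj u z <;>
        by_cases b4 : G.Adj v z <;> by_cases b5 : G.Adj z y <;> by_cases b6 : G.Adj w y <;>
        simp_all [huv, hnuv, hu', hv', hxy, Ne.symm hxy, huy, Ne.symm huy, hvy, Ne.symm hvy,
          hy, Ne.symm hy, hzu, hzv, hznw]
  rcases eq_or_ne u y with rfl | huy
  · -- (x,u) generic x
    simp only [(pivotEdge (pivotEdge G u v) z w).adj_comm x u,
      (pivotEdge (pivotEdge G z w) u v).adj_comm x u,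
      pivot_adj_other hBzw (Ne.symm hzu) (Ne.symm hwu) (Ne.symm hzx) hx,
      pivot_adj_swap1 huv (Ne.symm hux) (Ne.symm hvx),
      (pivotEdge G u v).adj_comm z u,
      pivot_adj_swap1 huv hzu hzv,
      pivot_adj_other huv hzu hzv (Ne.symm hux) (Ne.symm hvx),
      pivot_adj_notnbr huv hwu hwv hu hv,
      pivot_adj_swap1 hAuv (Ne.symm hux) (Ne.symm hvx),
      pivot_adj_other hzw (Ne.symm hzv) (Ne.symm hwv) (Ne.symm hzx) hx,
      G.adj_comm z v, G.adj_comm z u]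
    by_cases b1 : G.Adj u x <;> by_cases b2 : G.Adj v x <;> by_cases b3 : G.Adj u z <;>
      by_cases b4 : G.Adj v z <;> by_cases b5 : G.Adj z x <;> by_cases b6 : G.Adj w x <;>
      simp_all [huv, hnuv, hu', hv', hux, Ne.symm hux, hvx, Ne.symm hvx, hzx, Ne.symm hzx,
        hx, Ne.symm hx, hzu, hzv, hznw]
  rcases eq_or_ne v y with rfl | hvy
  · -- (x,v) generic x
    simp only [(pivotEdge (pivotEdge G u v) z w).adj_comm x v,
      (pivotEdge (pivotEdge G z w) u v).adj_comm x v,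
      pivot_adj_other hBzw (Ne.symm hzv) (Ne.symm hwv) (Ne.symm hzx) hx,
      pivot_adj_swap2 huv (Ne.symm hux) (Ne.symm hvx),
      (pivotEdge G u v).adj_comm z v,
      pivot_adj_swap2 huv hzu hzv,
      pivot_adj_other huv hzu hzv (Ne.symm hux) (Ne.symm hvx),
      pivot_adj_notnbr huv hwu hwv hu hv,
      pivot_adj_swap2 hAuv (Ne.symm hux) (Ne.symm hvx),
      pivot_adj_other hzw (Ne.symm hzu) (Ne.symm hwu) (Ne.symm hzx) hx,
      G.adj_comm z v, G.adj_comm z u]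
    by_cases b1 : G.Adj u x <;> by_cases b2 : G.Adj v x <;> by_cases b3 : G.Adj u z <;>
      by_cases b4 : G.Adj v z <;> by_cases b5 : G.Adj z x <;> by_cases b6 : G.Adj w x <;>
      simp_all [huv, hnuv, hu', hv', hux, Ne.symm hux, hvx, Ne.symm hvx, hzx, Ne.symm hzx,
        hx, Ne.symm hx, hzu, hzv, hznw]
  rcases eq_or_ne z y with rfl | hzy
  · -- (x,z) generic x
    simp only [(pivotEdge (pivotEdge G u v) z w).adj_comm x z,
      (pivotEdge (pivotEdge G z w) u v).adj_comm x z,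
      pivot_adj_swap1 hBzw (Ne.symm hzx) hx,
      pivot_adj_notnbr huv hwu hwv hu hv,
      pivot_adj_other hAuv hzu hzv (Ne.symm hux) (Ne.symm hvx),
      (pivotEdge G z w).adj_comm u z, (pivotEdge G z w).adj_comm v z,
      pivot_adj_swap1 hzw (Ne.symm hzu) (Ne.symm hwu),
      pivot_adj_swap1 hzw (Ne.symm hzv) (Ne.symm hwv),
      pivot_adj_swap1 hzw (Ne.symm hzx) hx,
      pivot_adj_other hzw (Ne.symm hzu) (Ne.symm hwu) (Ne.symm hzx) hx,
      pivot_adj_other hzw (Ne.symm hzv) (Ne.symm hwv) (Ne.symm hzx) hx,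
      G.adj_comm z u, G.adj_comm z v]
    by_cases b1 : G.Adj u x <;> by_cases b2 : G.Adj v x <;> by_cases b3 : G.Adj u z <;>
      by_cases b4 : G.Adj v z <;> by_cases b5 : G.Adj z x <;> by_cases b6 : G.Adj w x <;>
      simp_all [huv, hnuv, hu', hv', hux, Ne.symm hux, hvx, Ne.symm hvx, hzx, Ne.symm hzx,
        hx, Ne.symm hx, hzu, hzv, hznw]
  -- generic (x,y)
  simp only [pivot_adj_other hBzw (Ne.symm hzx) hx (Ne.symm hzy) hy,
    pivot_adj_notnbr huv hwu hwv hu hv,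
    pivot_adj_other huv hzu hzv (Ne.symm hux) (Ne.symm hvx),
    pivot_adj_other huv hzu hzv (Ne.symm huy) (Ne.symm hvy),
    pivot_adj_other huv (Ne.symm hux) (Ne.symm hvx) (Ne.symm huy) (Ne.symm hvy),
    pivot_adj_other hAuv (Ne.symm hux) (Ne.symm hvx) (Ne.symm huy) (Ne.symm hvy),
    pivot_adj_other hzw (Ne.symm hzu) (Ne.symm hwu) (Ne.symm hzx) hx,
    pivot_adj_other hzw (Ne.symm hzv) (Ne.symm hwv) (Ne.symm hzx) hx,
    pivot_adj_other hzw (Ne.symm hzu) (Ne.symm hwu) (Ne.symm hzy) hy,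
    pivot_adj_other hzw (Ne.symm hzv) (Ne.symm hwv) (Ne.symm hzy) hy,
    pivot_adj_other hzw (Ne.symm hzx) hx (Ne.symm hzy) hy,
    G.adj_comm z u, G.adj_comm z v]
  by_cases b1 : G.Adj u x <;> by_cases b2 : G.Adj v x <;> by_cases b3 : G.Adj u z <;>
    by_cases b4 : G.Adj v z <;> by_cases b5 : G.Adj z x <;> by_cases b6 : G.Adj w x <;>
    by_cases b7 : G.Adj u y <;> by_cases b8 : G.Adj v y <;> by_cases b9 : G.Adj z y <;>
    by_cases b10 : G.Adj w y <;> by_cases b11 : G.Adj x y <;>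
    simp_all [huv, hnuv, hu', hv', hxy, hux, Ne.symm hux, hvx, Ne.symm hvx, hzx, Ne.symm hzx,
      huy, Ne.symm huy, hvy, Ne.symm hvy, hzy, Ne.symm hzy, hx, Ne.symm hx, hy, Ne.symm hy,
      hzu, hzv, hznw]
end

section
variable {G : SimpleGraph V} {u v w z : V}
lemma caseA_edge (huv : G.Adj u v) (hwu : w ≠ u) (hwv : w ≠ v)
    (hu : ¬ G.Adj u w) (hv : ¬ G.Adj v w) (hwz : G.Adj w z) :
    (pivotEdge G z w).Adj u v := by
  have hzw : G.Adj z w := hwz.symm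
  have hnuv : u ≠ v := G.ne_of_adj huv
  have hu' : ¬ G.Adj w u := fun h => hu h.symm
  have hv' : ¬ G.Adj w v := fun h => hv h.symm
  have hzu : z ≠ u := fun h => hu (h ▸ hzw)
  have hzv : z ≠ v := fun h => hv (h ▸ hzw)
  rw [pivot_adj_other hzw (Ne.symm hzu) (Ne.symm hwu) (Ne.symm hzv) (Ne.symm hwv)]
  refine ⟨hnuv, ?_⟩
  by_cases b1 : G.Adj z u <;> by_cases b2 : G.Adj z v <;> simp_all [huv, hu', hv']
end

section
variable {G : SimpleGraph V} {u v w : V}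

lemma pivot_step_symm (h : PivotStep G (pivotEdge G u v)) :
    True := trivial

lemma PivotStep.symm {G G' : SimpleGraph V} (h : PivotStep G G') : PivotStep G' G := by
  obtain ⟨u, v, huv, rfl⟩ := h
  exact ⟨u, v, pivot_adj_uv huv, (pivot_involutive G u v).symm⟩

lemma PivotEquiv.refl (G : SimpleGraph V) : PivotEquiv G G := Relation.ReflTransGen.refl

lemma PivotEquiv.symm {G G' : SimpleGraph V} (h : PivotEquiv G G') : PivotEquiv G' G :=
  (@Relation.ReflTransGen.symmetric _ _ ⟨fun _ _ hs => hs.symm⟩).symm _ _ h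

lemma PivotEquiv.trans {G₁ G₂ G₃ : SimpleGraph V} (h : PivotEquiv G₁ G₂)
    (h' : PivotEquiv G₂ G₃) : PivotEquiv G₁ G₃ :=
  Relation.ReflTransGen.trans h h'

lemma PivotStep.pivotEquiv {G G' : SimpleGraph V} (h : PivotStep G G') : PivotEquiv G G' :=
  Relation.ReflTransGen.single h

lemma hasPivotMinor_of_pivotEquiv {H : SimpleGraph W} {G G' : SimpleGraph V}
    (h : PivotEquiv G G') (hm : HasPivotMinor G H) : HasPivotMinor G' H := by
  obtain ⟨s, K, hK, hiso⟩ := hm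
  exact ⟨s, K, h.symm.trans hK, hiso⟩

lemma localComp_isolated (hiso : ∀ t, ¬ G.Adj w t) (t : V) : ¬ (localComp G u).Adj w t := by
  rw [localComp_adj]
  rintro ⟨hne, (⟨h1, h2, h3⟩ | ⟨h1, h2⟩)⟩
  · exact hiso u h1.symm
  · exact hiso t h2

lemma pivot_isolated (hiso : ∀ t, ¬ G.Adj w t) (t : V) : ¬ (pivotEdge G u v).Adj w t :=
  localComp_isolated (localComp_isolated (localComp_isolated hiso)) t

lemma pivot_isolated_iff : (∀ t, ¬ G.Adj w t) ↔ (∀ t, ¬ (pivotEdge G u v).Adj w t) := by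
  constructor
  · exact fun h => pivot_isolated h
  · intro h t ht
    rw [← pivot_involutive G u v] at ht
    exact pivot_isolated h t ht

lemma induce_localComp {s : Set V} (hu : u ∈ s) :
    (localComp G u).induce s = localComp (G.induce s) ⟨u, hu⟩ := by
  ext a b
  cases a with
  | mk a ha =>
  cases b with
  | mk b hb =>
  simp only [SimpleGraph.comap_adj, Function.Embedding.coe_subtype, localComp_adj,
    Subtype.mk.injEq, ne_eq]

lemma induce_pivotEdge {s : Set V} (hu : u ∈ s) (hv : v ∈ s) :
    (pivotEdge G u v).induce s = pivotEdge (G.induce s) ⟨u, hu⟩ ⟨v, hv⟩ := by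
  show (localComp (localComp (localComp G u) v) u).induce s = _
  rw [induce_localComp hu, induce_localComp hv, induce_localComp hu]
  rfl
end

section
variable {H : SimpleGraph W}

lemma endpoint_case {G : SimpleGraph V} {u v : V} (huv : G.Adj u v)
    (h2 : ¬ (HasPivotMinor (G.induce {t : V | t ≠ u}) H ∧
      ∃ C : SimpleGraph ↥{t : V | t ≠ u}, IsContraction G u C ∧ HasPivotMinor C H)) :
    ¬ (HasPivotMinor ((pivotEdge G u v).induce {t : V | t ≠ u}) H ∧
      ∃ C : SimpleGraph ↥{t : V | t ≠ u}, IsContraction (pivotEdge G u v) u C ∧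
        HasPivotMinor C H) := by
  rintro ⟨hdel, C, hcon, hmin⟩
  have hnuv : u ≠ v := G.ne_of_adj huv
  have hPuv : (pivotEdge G u v).Adj u v := pivot_adj_uv huv
  have hPvuG : pivotEdge (pivotEdge G u v) v u = G := by
    rw [← pivot_comm hPuv]; exact pivot_involutive G u v
  apply h2
  refine ⟨?_, (pivotEdge G v u).induce {t | t ≠ u}, Or.inr ⟨v, huv, rfl⟩,
    by rwa [← pivot_comm huv]⟩
  rcases hcon with ⟨hisol, rfl⟩ | ⟨z', hz', rfl⟩
  · exact absurd hPuv (hisol v)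
  · rcases eq_or_ne v z' with rfl | hne
    · rwa [hPvuG] at hmin
    · have hz'u : z' ≠ u := ((pivotEdge G u v).ne_of_adj hz').symm
      have hgeq : (pivotEdge (pivotEdge (pivotEdge G u v) z' u) z' v).induce {t : V | t ≠ u}
          = G.induce {t : V | t ≠ u} := by
        ext ⟨x, hx⟩ ⟨y, hy⟩
        show (pivotEdge _ z' v).Adj x y ↔ G.Adj x y
        rw [wstar_pointwise hz' hPuv hne.symm hx hy, hPvuG]
      have hstep : PivotStep
          ((pivotEdge (pivotEdge G u v) z' u).induce {t : V | t ≠ u})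
          (G.induce {t : V | t ≠ u}) := by
        refine ⟨⟨z', hz'u⟩, ⟨v, Ne.symm hnuv⟩, ?_, ?_⟩
        · show (pivotEdge (pivotEdge G u v) z' u).Adj z' v
          exact (pivot_adj_swap1 hz'.symm hne (Ne.symm hnuv)).mpr hPuv
        · exact hgeq.symm.trans (induce_pivotEdge (show z' ∈ {t : V | t ≠ u} from hz'u)
            (show v ∈ {t : V | t ≠ u} from Ne.symm hnuv))
      exact hasPivotMinor_of_pivotEquiv hstep.pivotEquiv hmin

lemma offedge_nbr_case {G : SimpleGraph V} {u v w z' : V} (huv : G.Adj u v)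
    (huw : G.Adj u w) (hwu : w ≠ u) (hwv : w ≠ v)
    (hz' : (pivotEdge G u v).Adj w z')
    (hmin : HasPivotMinor
      ((pivotEdge (pivotEdge G u v) z' w).induce {t : V | t ≠ w}) H) :
    ∃ C₀ : SimpleGraph ↥{t : V | t ≠ w}, IsContraction G w C₀ ∧ HasPivotMinor C₀ H := by
  have hnuv : u ≠ v := G.ne_of_adj huv
  have hPvw : (pivotEdge G u v).Adj v w := (pivot_adj_swap2 huv hwu hwv).mpr huw
  have hvw : v ≠ w := Ne.symm hwv
  refine ⟨(pivotEdge G u w).induce {t : V | t ≠ w}, Or.inr ⟨u, huw.symm, rfl⟩, ?_⟩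
  rcases eq_or_ne v z' with rfl | hne
  · -- z' = v
    have hgeq : (pivotEdge (pivotEdge G u v) v w).induce {t : V | t ≠ w}
        = (pivotEdge G u w).induce {t : V | t ≠ w} := by
      ext ⟨x, hx⟩ ⟨y, hy⟩
      exact caseB_pointwise huv huw hwv hx hy
    rwa [hgeq] at hmin
  · have hz'w : z' ≠ w := ((pivotEdge G u v).ne_of_adj hz').symm
    have hgeq : (pivotEdge (pivotEdge (pivotEdge G u v) z' w) z' v).induce {t : V | t ≠ w}
        = (pivotEdge G u w).induce {t : V | t ≠ w} := by
      ext ⟨x, hx⟩ ⟨y, hy⟩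
      show (pivotEdge _ z' v).Adj x y ↔ _
      rw [wstar_pointwise hz' hPvw.symm hne.symm hx hy]
      exact caseB_pointwise huv huw hwv hx hy
    have hstep : PivotStep
        ((pivotEdge (pivotEdge G u v) z' w).induce {t : V | t ≠ w})
        ((pivotEdge G u w).induce {t : V | t ≠ w}) := by
      refine ⟨⟨z', hz'w⟩, ⟨v, hvw⟩, ?_, ?_⟩
      · show (pivotEdge (pivotEdge G u v) z' w).Adj z' v
        exact (pivot_adj_swap1 hz'.symm hne hvw).mpr hPvw.symm
      · exact hgeq.symm.trans (induce_pivotEdge (show z' ∈ {t : V | t ≠ w} from hz'w)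
          (show v ∈ {t : V | t ≠ w} from hvw))
    exact hasPivotMinor_of_pivotEquiv hstep.pivotEquiv hmin

lemma offedge_case {G : SimpleGraph V} {u v w : V} (huv : G.Adj u v)
    (hwu : w ≠ u) (hwv : w ≠ v)
    (h2 : ¬ (HasPivotMinor (G.induce {t : V | t ≠ w}) H ∧
      ∃ C : SimpleGraph ↥{t : V | t ≠ w}, IsContraction G w C ∧ HasPivotMinor C H)) :
    ¬ (HasPivotMinor ((pivotEdge G u v).induce {t : V | t ≠ w}) H ∧
      ∃ C : SimpleGraph ↥{t : V | t ≠ w}, IsContraction (pivotEdge G u v) w C ∧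
        HasPivotMinor C H) := by
  rintro ⟨hdel, C, hcon, hmin⟩
  have hnuv : u ≠ v := G.ne_of_adj huv
  have huS : u ∈ {t : V | t ≠ w} := Ne.symm hwu
  have hvS : v ∈ {t : V | t ≠ w} := Ne.symm hwv
  have hstep0 : PivotStep (G.induce {t : V | t ≠ w})
      ((pivotEdge G u v).induce {t : V | t ≠ w}) := by
    refine ⟨⟨u, huS⟩, ⟨v, hvS⟩, huv, ?_⟩
    exact induce_pivotEdge huS hvS
  apply h2
  refine ⟨hasPivotMinor_of_pivotEquiv hstep0.pivotEquiv.symm hdel, ?_⟩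
  rcases hcon with ⟨hisol, rfl⟩ | ⟨z', hz', rfl⟩
  · -- w isolated in the pivot, hence in G
    have hisoG : ∀ t, ¬ G.Adj w t := pivot_isolated_iff.mpr hisol
    exact ⟨G.induce {t : V | t ≠ w}, Or.inl ⟨hisoG, rfl⟩,
      hasPivotMinor_of_pivotEquiv hstep0.pivotEquiv.symm hmin⟩
  · by_cases hu : G.Adj u w
    · exact offedge_nbr_case huv hu hwu hwv hz' hmin
    by_cases hv : G.Adj v w
    · rw [pivot_comm huv] at hz' hmin
      exact offedge_nbr_case huv.symm hv hwv hwu hz' hmin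
    · -- caseA
      have hwz' : G.Adj w z' := (pivot_adj_notnbr huv hwu hwv hu hv).mp hz'
      have hz'w : z' ≠ w := ((pivotEdge G u v).ne_of_adj hz').symm
      have hAuv : (pivotEdge G z' w).Adj u v := caseA_edge huv hwu hwv hu hv hwz'
      have hgeq : (pivotEdge (pivotEdge G u v) z' w).induce {t : V | t ≠ w}
          = (pivotEdge (pivotEdge G z' w) u v).induce {t : V | t ≠ w} := by
        ext ⟨x, hx⟩ ⟨y, hy⟩
        exact caseA_pointwise huv hwu hwv hu hv hwz' hx hy
      have hstep : PivotStep ((pivotEdge G z' w).induce {t : V | t ≠ w})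
          ((pivotEdge (pivotEdge G u v) z' w).induce {t : V | t ≠ w}) := by
        refine ⟨⟨u, huS⟩, ⟨v, hvS⟩, hAuv, ?_⟩
        rw [hgeq]
        exact induce_pivotEdge huS hvS
      exact ⟨(pivotEdge G z' w).induce {t : V | t ≠ w}, Or.inr ⟨z', hwz', rfl⟩,
        hasPivotMinor_of_pivotEquiv hstep.pivotEquiv.symm hmin⟩

lemma pivotUnique_step {G G' : SimpleGraph V}
    (h : PivotUnique G H) (hstep : PivotStep G G') : PivotUnique G' H := by
  obtain ⟨u, v, huv, rfl⟩ := hstep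
  constructor
  · exact hasPivotMinor_of_pivotEquiv (PivotStep.pivotEquiv ⟨u, v, huv, rfl⟩) h.1
  · intro w
    rcases eq_or_ne u w with rfl | hwu
    · exact endpoint_case huv (h.2 u)
    rcases eq_or_ne v w with rfl | hwv
    · rw [pivot_comm huv]
      exact endpoint_case huv.symm (h.2 v)
    · exact offedge_case huv (Ne.symm hwu) (Ne.symm hwv) (h.2 w)
end


/-- For every graph `H`, if `G` is `H`-pivot-unique, then every
graph pivot-equivalent to `G` is `H`-pivot-unique. -/
theorem pivotUnique_of_pivotEquiv {V : Type*} {W : Type*} [Fintype V] [Fintype W]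
    (G G' : SimpleGraph V) (H : SimpleGraph W)
    (h : PivotUnique G H) (he : PivotEquiv G G') :
    PivotUnique G' H := by
  induction he with
  | refl => exact h
  | tail _ hstep ih => exact pivotUnique_step ih hstep
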